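/- Let 𝕂 be ℝ or ℂ and V a 𝕂-vector space. (a) A 4-linear map T : V⁴ → 𝕂 is an algebraic curvature tensor if and only if y_t* T = 12·T, where y_t ∈ 𝕂[S₄] is the Young symmetrizer of the tableau t with rows (1,3) and (2,4), i.e. y_t = Σ_{p∈H_t} Σ_{q∈V_t} sign(q)·(p∘q) with H_t = {id, (1 3), (2 4), (1 3)(2 4)} and V_t = {id, (1 2), (3 4), (1 2)(3 4)}. (b) A 5-linear map T̃ : V⁵ → 𝕂 is an algebraic covariant derivative curvature tensor if and only if y_{t'}* T̃ = 24·T̃. -/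

import Mathlib

/-- The action of a group-algebra element `a ∈ 𝕂[S_r]` on an `r`-linear map:
`(aT)(v₁,…,v_r) = Σ_p a(p)·T(v_{p(1)},…,v_{p(r)})`. -/
noncomputable def gaAct {𝕂 : Type*} [RCLike 𝕂] {V : Type*} [AddCommGroup V] [Module 𝕂 V]
    {r : ℕ} (a : MonoidAlgebra 𝕂 (Equiv.Perm (Fin r)))
    (T : MultilinearMap 𝕂 (fun _ : Fin r => V) 𝕂) :
    MultilinearMap 𝕂 (fun _ : Fin r => V) 𝕂 :=
  ∑ p : Equiv.Perm (Fin r), a.coeff p • T.domDomCongr p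

/-- The star map `a = Σ_p a(p)·p ↦ a* = Σ_p a(p)·p⁻¹` on the group algebra. -/
noncomputable def gaStar {𝕂 : Type*} [RCLike 𝕂] {r : ℕ}
    (a : MonoidAlgebra 𝕂 (Equiv.Perm (Fin r))) : MonoidAlgebra 𝕂 (Equiv.Perm (Fin r)) :=
  ∑ p : Equiv.Perm (Fin r), MonoidAlgebra.single p⁻¹ (a.coeff p)

/-- The horizontal group `H_t = {id, (1 3), (2 4), (1 3)(2 4)}` of the tableau `t`
with rows `(1,3)` and `(2,4)` (0-based transpositions of `{0,2}` and `{1,3}`). -/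
def horizT : Finset (Equiv.Perm (Fin 4)) :=
  {1, Equiv.swap 0 2, Equiv.swap 1 3, Equiv.swap 0 2 * Equiv.swap 1 3}

/-- The vertical group `V_t = {id, (1 2), (3 4), (1 2)(3 4)}` of `t`
(0-based transpositions of `{0,1}` and `{2,3}`). -/
def vertT : Finset (Equiv.Perm (Fin 4)) :=
  {1, Equiv.swap 0 1, Equiv.swap 2 3, Equiv.swap 0 1 * Equiv.swap 2 3}

/-- The Young symmetrizer `y_t = Σ_{p∈H_t} Σ_{q∈V_t} sign(q)·(p∘q)` of the tableau `t`
with rows `(1,3)` and `(2,4)`. -/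
noncomputable def youngT (𝕂 : Type*) [RCLike 𝕂] : MonoidAlgebra 𝕂 (Equiv.Perm (Fin 4)) :=
  ∑ p ∈ horizT, ∑ q ∈ vertT,
    MonoidAlgebra.single (p * q) (((Equiv.Perm.sign q : ℤ) : 𝕂))

/-- The horizontal group `H_{t'}` of the tableau `t'` with rows `(1,3,5)` and `(2,4)`
(0-based: rows `{0,2,4}` and `{1,3}`): all permutations mapping each row to itself. -/
def horizT' : Finset (Equiv.Perm (Fin 5)) :=
  Finset.univ.filter fun p =>
    (∀ i ∈ ({0, 2, 4} : Finset (Fin 5)), p i ∈ ({0, 2, 4} : Finset (Fin 5))) ∧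
    (∀ i ∈ ({1, 3} : Finset (Fin 5)), p i ∈ ({1, 3} : Finset (Fin 5)))

/-- The vertical group `V_{t'}` of `t'`: all permutations mapping each of the columns
`{1,2}` and `{3,4}` (0-based `{0,1}`, `{2,3}`) to itself and fixing `5` (0-based `4`). -/
def vertT' : Finset (Equiv.Perm (Fin 5)) :=
  Finset.univ.filter fun p =>
    (∀ i ∈ ({0, 1} : Finset (Fin 5)), p i ∈ ({0, 1} : Finset (Fin 5))) ∧
    (∀ i ∈ ({2, 3} : Finset (Fin 5)), p i ∈ ({2, 3} : Finset (Fin 5))) ∧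
    p 4 = 4

/-- The Young symmetrizer `y_{t'} = Σ_{p∈H_{t'}} Σ_{q∈V_{t'}} sign(q)·(p∘q)`. -/
noncomputable def youngT' (𝕂 : Type*) [RCLike 𝕂] : MonoidAlgebra 𝕂 (Equiv.Perm (Fin 5)) :=
  ∑ p ∈ horizT', ∑ q ∈ vertT',
    MonoidAlgebra.single (p * q) (((Equiv.Perm.sign q : ℤ) : 𝕂))

/-- An algebraic curvature tensor. -/
def IsACT {𝕂 : Type*} [RCLike 𝕂] {V : Type*} [AddCommGroup V] [Module 𝕂 V]
    (T : MultilinearMap 𝕂 (fun _ : Fin 4 => V) 𝕂) : Prop :=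
  ∀ w x y z : V,
    T ![w, x, y, z] = - T ![w, x, z, y] ∧
    T ![w, x, y, z] = T ![y, z, w, x] ∧
    T ![w, x, y, z] + T ![w, y, z, x] + T ![w, z, x, y] = 0

/-- An algebraic covariant derivative curvature tensor. -/
def IsACDCT {𝕂 : Type*} [RCLike 𝕂] {V : Type*} [AddCommGroup V] [Module 𝕂 V]
    (T : MultilinearMap 𝕂 (fun _ : Fin 5 => V) 𝕂) : Prop :=
  ∀ u w x y z : V,
    T ![w, x, y, z, u] = - T ![w, x, z, y, u] ∧
    T ![w, x, y, z, u] = T ![y, z, w, x, u] ∧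
    T ![w, x, y, z, u] + T ![w, y, z, x, u] + T ![w, z, x, y, u] = 0 ∧
    T ![w, x, y, z, u] + T ![w, x, z, u, y] + T ![w, x, u, y, z] = 0

theorem gaAct_gaStar_apply {𝕂 : Type*} [RCLike 𝕂] {V : Type*} [AddCommGroup V] [Module 𝕂 V]
    {r : ℕ} (a : MonoidAlgebra 𝕂 (Equiv.Perm (Fin r)))
    (T : MultilinearMap 𝕂 (fun _ : Fin r => V) 𝕂) (v : Fin r → V) :
    gaAct (gaStar a) T v = ∑ σ : Equiv.Perm (Fin r), a.coeff σ * T (fun i => v (σ⁻¹ i)) := by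
  simp only [gaAct, gaStar, MultilinearMap.sum_apply, MultilinearMap.smul_apply,
    MultilinearMap.domDomCongr_apply, smul_eq_mul]
  have h1 : ∀ x : Equiv.Perm (Fin r),
      (∑ p : Equiv.Perm (Fin r), MonoidAlgebra.single (R := 𝕂) p⁻¹ (a.coeff p)).coeff x
        = ∑ p : Equiv.Perm (Fin r), if p⁻¹ = x then a.coeff p else 0 := by
    intro x
    rw [MonoidAlgebra.coeff_sum, Finset.sum_apply']
    exact Finset.sum_congr rfl fun p _ => Finsupp.single_apply
  simp only [h1, Finset.sum_mul, ite_mul, zero_mul]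
  rw [Finset.sum_comm]
  refine Finset.sum_congr rfl fun σ _ => ?_
  rw [Finset.sum_eq_single σ⁻¹]
  · simp
  · intro b _ hb
    rw [if_neg]
    intro h; exact hb h.symm
  · simp

theorem sum_single_mul {𝕂 : Type*} [RCLike 𝕂] {r : ℕ} {ι κ : Type*}
    (s : Finset ι) (t : Finset κ) (g : ι → κ → Equiv.Perm (Fin r)) (c : κ → 𝕂)
    (f : Equiv.Perm (Fin r) → 𝕂) :
    ∑ σ : Equiv.Perm (Fin r), (∑ p ∈ s, ∑ q ∈ t, MonoidAlgebra.single (g p q) (c q)).coeff σ * f σ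
      = ∑ p ∈ s, ∑ q ∈ t, c q * f (g p q) := by
  have h1 : ∀ x : Equiv.Perm (Fin r),
      (∑ p ∈ s, ∑ q ∈ t, MonoidAlgebra.single (R := 𝕂) (g p q) (c q)).coeff x
        = ∑ p ∈ s, ∑ q ∈ t, if g p q = x then c q else 0 := by
    intro x
    rw [MonoidAlgebra.coeff_sum, Finset.sum_apply']
    refine Finset.sum_congr rfl fun p _ => ?_
    rw [MonoidAlgebra.coeff_sum, Finset.sum_apply']
    exact Finset.sum_congr rfl fun q _ => Finsupp.single_apply
  simp only [h1, Finset.sum_mul, ite_mul, zero_mul]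
  rw [Finset.sum_comm]
  refine Finset.sum_congr rfl fun p _ => ?_
  rw [Finset.sum_comm]
  refine Finset.sum_congr rfl fun q _ => ?_
  simp [Finset.sum_ite_eq]

theorem keyA {𝕂 : Type*} [RCLike 𝕂] {V : Type*} [AddCommGroup V] [Module 𝕂 V]
    (T : MultilinearMap 𝕂 (fun _ : Fin 4 => V) 𝕂) (v : Fin 4 → V) :
    gaAct (gaStar (youngT 𝕂)) T v =
      T ![v 0, v 1, v 2, v 3] - T ![v 1, v 0, v 2, v 3] - T ![v 0, v 1, v 3, v 2] + T ![v 1, v 0, v 3, v 2] + T ![v 2, v 1, v 0, v 3] - T ![v 2, v 0, v 1, v 3] - T ![v 3, v 1, v 0, v 2] + T ![v 3, v 0, v 1, v 2] + T ![v 0, v 3, v 2, v 1] - T ![v 1, v 3, v 2, v 0] - T ![v 0, v 2, v 3, v 1] + T ![v 1, v 2, v 3, v 0] + T ![v 2, v 3, v 0, v 1] - T ![v 2, v 3, v 1, v 0] - T ![v 3, v 2, v 0, v 1] + T ![v 3, v 2, v 1, v 0] := by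
  rw [gaAct_gaStar_apply, youngT,
    sum_single_mul horizT vertT (fun p q => p * q)
      (fun q => ((Equiv.Perm.sign q : ℤ) : 𝕂)) (fun σ => T fun i => v (σ⁻¹ i))]
  rw [horizT, vertT]
  simp (config := { decide := true }) only [Finset.sum_insert, Finset.mem_insert,
    Finset.mem_singleton, Finset.sum_singleton]
  have s0 : ((Equiv.Perm.sign (1 : Equiv.Perm (Fin 4)) : ℤ) : 𝕂) = 1 := by
    rw [show (Equiv.Perm.sign (1 : Equiv.Perm (Fin 4)) : ℤ) = 1 from by decide]; norm_num
  have s1 : ((Equiv.Perm.sign (Equiv.swap 0 1 : Equiv.Perm (Fin 4)) : ℤ) : 𝕂) = -1 := by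
    rw [show (Equiv.Perm.sign (Equiv.swap 0 1 : Equiv.Perm (Fin 4)) : ℤ) = -1 from by decide]; norm_num
  have s2 : ((Equiv.Perm.sign (Equiv.swap 2 3 : Equiv.Perm (Fin 4)) : ℤ) : 𝕂) = -1 := by
    rw [show (Equiv.Perm.sign (Equiv.swap 2 3 : Equiv.Perm (Fin 4)) : ℤ) = -1 from by decide]; norm_num
  have s3 : ((Equiv.Perm.sign (Equiv.swap 0 1 * Equiv.swap 2 3 : Equiv.Perm (Fin 4)) : ℤ) : 𝕂) = 1 := by
    rw [show (Equiv.Perm.sign (Equiv.swap 0 1 * Equiv.swap 2 3 : Equiv.Perm (Fin 4)) : ℤ) = 1 from by decide]; norm_num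
  have e0 : (T fun i => v ((((1) * (1) : Equiv.Perm (Fin 4)))⁻¹ i)) = T ![v 0, v 1, v 2, v 3] :=
    congrArg T (by funext i; fin_cases i <;> rfl)
  have e1 : (T fun i => v ((((1) * (Equiv.swap 0 1) : Equiv.Perm (Fin 4)))⁻¹ i)) = T ![v 1, v 0, v 2, v 3] :=
    congrArg T (by funext i; fin_cases i <;> rfl)
  have e2 : (T fun i => v ((((1) * (Equiv.swap 2 3) : Equiv.Perm (Fin 4)))⁻¹ i)) = T ![v 0, v 1, v 3, v 2] :=
    congrArg T (by funext i; fin_cases i <;> rfl)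
  have e3 : (T fun i => v ((((1) * (Equiv.swap 0 1 * Equiv.swap 2 3) : Equiv.Perm (Fin 4)))⁻¹ i)) = T ![v 1, v 0, v 3, v 2] :=
    congrArg T (by funext i; fin_cases i <;> rfl)
  have e4 : (T fun i => v ((((Equiv.swap 0 2) * (1) : Equiv.Perm (Fin 4)))⁻¹ i)) = T ![v 2, v 1, v 0, v 3] :=
    congrArg T (by funext i; fin_cases i <;> rfl)
  have e5 : (T fun i => v ((((Equiv.swap 0 2) * (Equiv.swap 0 1) : Equiv.Perm (Fin 4)))⁻¹ i)) = T ![v 2, v 0, v 1, v 3] :=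
    congrArg T (by funext i; fin_cases i <;> rfl)
  have e6 : (T fun i => v ((((Equiv.swap 0 2) * (Equiv.swap 2 3) : Equiv.Perm (Fin 4)))⁻¹ i)) = T ![v 3, v 1, v 0, v 2] :=
    congrArg T (by funext i; fin_cases i <;> rfl)
  have e7 : (T fun i => v ((((Equiv.swap 0 2) * (Equiv.swap 0 1 * Equiv.swap 2 3) : Equiv.Perm (Fin 4)))⁻¹ i)) = T ![v 3, v 0, v 1, v 2] :=
    congrArg T (by funext i; fin_cases i <;> rfl)
  have e8 : (T fun i => v ((((Equiv.swap 1 3) * (1) : Equiv.Perm (Fin 4)))⁻¹ i)) = T ![v 0, v 3, v 2, v 1] :=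
    congrArg T (by funext i; fin_cases i <;> rfl)
  have e9 : (T fun i => v ((((Equiv.swap 1 3) * (Equiv.swap 0 1) : Equiv.Perm (Fin 4)))⁻¹ i)) = T ![v 1, v 3, v 2, v 0] :=
    congrArg T (by funext i; fin_cases i <;> rfl)
  have e10 : (T fun i => v ((((Equiv.swap 1 3) * (Equiv.swap 2 3) : Equiv.Perm (Fin 4)))⁻¹ i)) = T ![v 0, v 2, v 3, v 1] :=
    congrArg T (by funext i; fin_cases i <;> rfl)
  have e11 : (T fun i => v ((((Equiv.swap 1 3) * (Equiv.swap 0 1 * Equiv.swap 2 3) : Equiv.Perm (Fin 4)))⁻¹ i)) = T ![v 1, v 2, v 3, v 0] :=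
    congrArg T (by funext i; fin_cases i <;> rfl)
  have e12 : (T fun i => v ((((Equiv.swap 0 2 * Equiv.swap 1 3) * (1) : Equiv.Perm (Fin 4)))⁻¹ i)) = T ![v 2, v 3, v 0, v 1] :=
    congrArg T (by funext i; fin_cases i <;> rfl)
  have e13 : (T fun i => v ((((Equiv.swap 0 2 * Equiv.swap 1 3) * (Equiv.swap 0 1) : Equiv.Perm (Fin 4)))⁻¹ i)) = T ![v 2, v 3, v 1, v 0] :=
    congrArg T (by funext i; fin_cases i <;> rfl)
  have e14 : (T fun i => v ((((Equiv.swap 0 2 * Equiv.swap 1 3) * (Equiv.swap 2 3) : Equiv.Perm (Fin 4)))⁻¹ i)) = T ![v 3, v 2, v 0, v 1] :=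
    congrArg T (by funext i; fin_cases i <;> rfl)
  have e15 : (T fun i => v ((((Equiv.swap 0 2 * Equiv.swap 1 3) * (Equiv.swap 0 1 * Equiv.swap 2 3) : Equiv.Perm (Fin 4)))⁻¹ i)) = T ![v 3, v 2, v 1, v 0] :=
    congrArg T (by funext i; fin_cases i <;> rfl)
  rw [s0, s1, s2, s3, e0, e1, e2, e3, e4, e5, e6, e7, e8, e9, e10, e11, e12, e13, e14, e15]
  ring

theorem keyB {𝕂 : Type*} [RCLike 𝕂] {V : Type*} [AddCommGroup V] [Module 𝕂 V]
    (T : MultilinearMap 𝕂 (fun _ : Fin 5 => V) 𝕂) (v : Fin 5 → V) :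
    gaAct (gaStar (youngT' 𝕂)) T v =
      T ![v 0, v 1, v 2, v 3, v 4] - T ![v 0, v 1, v 3, v 2, v 4] - T ![v 1, v 0, v 2, v 3, v 4] + T ![v 1, v 0, v 3, v 2, v 4] + T ![v 0, v 1, v 4, v 3, v 2] - T ![v 0, v 1, v 4, v 2, v 3] - T ![v 1, v 0, v 4, v 3, v 2] + T ![v 1, v 0, v 4, v 2, v 3] + T ![v 0, v 3, v 2, v 1, v 4] - T ![v 0, v 2, v 3, v 1, v 4] - T ![v 1, v 3, v 2, v 0, v 4] + T ![v 1, v 2, v 3, v 0, v 4] + T ![v 0, v 3, v 4, v 1, v 2] - T ![v 0, v 2, v 4, v 1, v 3] - T ![v 1, v 3, v 4, v 0, v 2] + T ![v 1, v 2, v 4, v 0, v 3] + T ![v 2, v 1, v 0, v 3, v 4] - T ![v 3, v 1, v 0, v 2, v 4] - T ![v 2, v 0, v 1, v 3, v 4] + T ![v 3, v 0, v 1, v 2, v 4] + T ![v 4, v 1, v 0, v 3, v 2] - T ![v 4, v 1, v 0, v 2, v 3] - T ![v 4, v 0, v 1, v 3, v 2] + T ![v 4, v 0, v 1, v 2, v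 3] + T ![v 2, v 3, v 0, v 1, v 4] - T ![v 3, v 2, v 0, v 1, v 4] - T ![v 2, v 3, v 1, v 0, v 4] + T ![v 3, v 2, v 1, v 0, v 4] + T ![v 4, v 3, v 0, v 1, v 2] - T ![v 4, v 2, v 0, v 1, v 3] - T ![v 4, v 3, v 1, v 0, v 2] + T ![v 4, v 2, v 1, v 0, v 3] + T ![v 2, v 1, v 4, v 3, v 0] - T ![v 3, v 1, v 4, v 2, v 0] - T ![v 2, v 0, v 4, v 3, v 1] + T ![v 3, v 0, v 4, v 2, v 1] + T ![v 4, v 1, v 2, v 3, v 0] - T ![v 4, v 1, v 3, v 2, v 0] - T ![v 4, v 0, v 2, v 3, v 1] + T ![v 4, v 0, v 3, v 2, v 1] + T ![v 2, v 3, v 4, v 1, v 0] - T ![v 3, v 2, v 4, v 1, v 0] - T ![v 2, v 3, v 4, v 0, v 1] + T ![v 3, v 2, v 4, v 0, v 1] + T ![v 4, v 3, v 2, v 1, v 0] - T ![v 4, v 2, v 3, v 1, v 0] - T ![v 4, v 3, v 2, v 0, v 1] + T ![v 4, v 2, v 3, v 0, v 1] := by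
  rw [gaAct_gaStar_apply, youngT',
    sum_single_mul horizT' vertT' (fun p q => p * q)
      (fun q => ((Equiv.Perm.sign q : ℤ) : 𝕂)) (fun σ => T fun i => v (σ⁻¹ i))]
  rw [show horizT' = ({1, Equiv.swap 2 4, Equiv.swap 1 3, Equiv.swap 1 3 * Equiv.swap 2 4, Equiv.swap 0 2, Equiv.swap 0 4 * Equiv.swap 0 2, Equiv.swap 0 2 * Equiv.swap 1 3, Equiv.swap 0 4 * Equiv.swap 0 2 * Equiv.swap 1 3, Equiv.swap 0 2 * Equiv.swap 0 4, Equiv.swap 0 4, Equiv.swap 0 2 * Equiv.swap 0 4 * Equiv.swap 1 3, Equiv.swap 0 4 * Equiv.swap 1 3} : Finset (Equiv.Perm (Fin 5))) from by decide]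
  rw [show vertT' = ({1, Equiv.swap 2 3, Equiv.swap 0 1, Equiv.swap 0 1 * Equiv.swap 2 3} : Finset (Equiv.Perm (Fin 5))) from by decide]
  simp (config := { decide := true }) only [Finset.sum_insert, Finset.mem_insert,
    Finset.mem_singleton, Finset.sum_singleton]
  have s0 : ((Equiv.Perm.sign (1 : Equiv.Perm (Fin 5)) : ℤ) : 𝕂) = 1 := by
    rw [show (Equiv.Perm.sign (1 : Equiv.Perm (Fin 5)) : ℤ) = 1 from by decide]; norm_num
  have s1 : ((Equiv.Perm.sign (Equiv.swap 2 3 : Equiv.Perm (Fin 5)) : ℤ) : 𝕂) = -1 := by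
    rw [show (Equiv.Perm.sign (Equiv.swap 2 3 : Equiv.Perm (Fin 5)) : ℤ) = -1 from by decide]; norm_num
  have s2 : ((Equiv.Perm.sign (Equiv.swap 0 1 : Equiv.Perm (Fin 5)) : ℤ) : 𝕂) = -1 := by
    rw [show (Equiv.Perm.sign (Equiv.swap 0 1 : Equiv.Perm (Fin 5)) : ℤ) = -1 from by decide]; norm_num
  have s3 : ((Equiv.Perm.sign (Equiv.swap 0 1 * Equiv.swap 2 3 : Equiv.Perm (Fin 5)) : ℤ) : 𝕂) = 1 := by
    rw [show (Equiv.Perm.sign (Equiv.swap 0 1 * Equiv.swap 2 3 : Equiv.Perm (Fin 5)) : ℤ) = 1 from by decide]; norm_num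
  have e0 : (T fun i => v ((((1) * (1) : Equiv.Perm (Fin 5)))⁻¹ i)) = T ![v 0, v 1, v 2, v 3, v 4] :=
    congrArg T (by funext i; fin_cases i <;> rfl)
  have e1 : (T fun i => v ((((1) * (Equiv.swap 2 3) : Equiv.Perm (Fin 5)))⁻¹ i)) = T ![v 0, v 1, v 3, v 2, v 4] :=
    congrArg T (by funext i; fin_cases i <;> rfl)
  have e2 : (T fun i => v ((((1) * (Equiv.swap 0 1) : Equiv.Perm (Fin 5)))⁻¹ i)) = T ![v 1, v 0, v 2, v 3, v 4] :=
    congrArg T (by funext i; fin_cases i <;> rfl)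
  have e3 : (T fun i => v ((((1) * (Equiv.swap 0 1 * Equiv.swap 2 3) : Equiv.Perm (Fin 5)))⁻¹ i)) = T ![v 1, v 0, v 3, v 2, v 4] :=
    congrArg T (by funext i; fin_cases i <;> rfl)
  have e4 : (T fun i => v ((((Equiv.swap 2 4) * (1) : Equiv.Perm (Fin 5)))⁻¹ i)) = T ![v 0, v 1, v 4, v 3, v 2] :=
    congrArg T (by funext i; fin_cases i <;> rfl)
  have e5 : (T fun i => v ((((Equiv.swap 2 4) * (Equiv.swap 2 3) : Equiv.Perm (Fin 5)))⁻¹ i)) = T ![v 0, v 1, v 4, v 2, v 3] :=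
    congrArg T (by funext i; fin_cases i <;> rfl)
  have e6 : (T fun i => v ((((Equiv.swap 2 4) * (Equiv.swap 0 1) : Equiv.Perm (Fin 5)))⁻¹ i)) = T ![v 1, v 0, v 4, v 3, v 2] :=
    congrArg T (by funext i; fin_cases i <;> rfl)
  have e7 : (T fun i => v ((((Equiv.swap 2 4) * (Equiv.swap 0 1 * Equiv.swap 2 3) : Equiv.Perm (Fin 5)))⁻¹ i)) = T ![v 1, v 0, v 4, v 2, v 3] :=
    congrArg T (by funext i; fin_cases i <;> rfl)
  have e8 : (T fun i => v ((((Equiv.swap 1 3) * (1) : Equiv.Perm (Fin 5)))⁻¹ i)) = T ![v 0, v 3, v 2, v 1, v 4] :=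
    congrArg T (by funext i; fin_cases i <;> rfl)
  have e9 : (T fun i => v ((((Equiv.swap 1 3) * (Equiv.swap 2 3) : Equiv.Perm (Fin 5)))⁻¹ i)) = T ![v 0, v 2, v 3, v 1, v 4] :=
    congrArg T (by funext i; fin_cases i <;> rfl)
  have e10 : (T fun i => v ((((Equiv.swap 1 3) * (Equiv.swap 0 1) : Equiv.Perm (Fin 5)))⁻¹ i)) = T ![v 1, v 3, v 2, v 0, v 4] :=
    congrArg T (by funext i; fin_cases i <;> rfl)
  have e11 : (T fun i => v ((((Equiv.swap 1 3) * (Equiv.swap 0 1 * Equiv.swap 2 3) : Equiv.Perm (Fin 5)))⁻¹ i)) = T ![v 1, v 2, v 3, v 0, v 4] :=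
    congrArg T (by funext i; fin_cases i <;> rfl)
  have e12 : (T fun i => v ((((Equiv.swap 1 3 * Equiv.swap 2 4) * (1) : Equiv.Perm (Fin 5)))⁻¹ i)) = T ![v 0, v 3, v 4, v 1, v 2] :=
    congrArg T (by funext i; fin_cases i <;> rfl)
  have e13 : (T fun i => v ((((Equiv.swap 1 3 * Equiv.swap 2 4) * (Equiv.swap 2 3) : Equiv.Perm (Fin 5)))⁻¹ i)) = T ![v 0, v 2, v 4, v 1, v 3] :=
    congrArg T (by funext i; fin_cases i <;> rfl)
  have e14 : (T fun i => v ((((Equiv.swap 1 3 * Equiv.swap 2 4) * (Equiv.swap 0 1) : Equiv.Perm (Fin 5)))⁻¹ i)) = T ![v 1, v 3, v 4, v 0, v 2] :=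
    congrArg T (by funext i; fin_cases i <;> rfl)
  have e15 : (T fun i => v ((((Equiv.swap 1 3 * Equiv.swap 2 4) * (Equiv.swap 0 1 * Equiv.swap 2 3) : Equiv.Perm (Fin 5)))⁻¹ i)) = T ![v 1, v 2, v 4, v 0, v 3] :=
    congrArg T (by funext i; fin_cases i <;> rfl)
  have e16 : (T fun i => v ((((Equiv.swap 0 2) * (1) : Equiv.Perm (Fin 5)))⁻¹ i)) = T ![v 2, v 1, v 0, v 3, v 4] :=
    congrArg T (by funext i; fin_cases i <;> rfl)
  have e17 : (T fun i => v ((((Equiv.swap 0 2) * (Equiv.swap 2 3) : Equiv.Perm (Fin 5)))⁻¹ i)) = T ![v 3, v 1, v 0, v 2, v 4] :=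
    congrArg T (by funext i; fin_cases i <;> rfl)
  have e18 : (T fun i => v ((((Equiv.swap 0 2) * (Equiv.swap 0 1) : Equiv.Perm (Fin 5)))⁻¹ i)) = T ![v 2, v 0, v 1, v 3, v 4] :=
    congrArg T (by funext i; fin_cases i <;> rfl)
  have e19 : (T fun i => v ((((Equiv.swap 0 2) * (Equiv.swap 0 1 * Equiv.swap 2 3) : Equiv.Perm (Fin 5)))⁻¹ i)) = T ![v 3, v 0, v 1, v 2, v 4] :=
    congrArg T (by funext i; fin_cases i <;> rfl)
  have e20 : (T fun i => v ((((Equiv.swap 0 4 * Equiv.swap 0 2) * (1) : Equiv.Perm (Fin 5)))⁻¹ i)) = T ![v 4, v 1, v 0, v 3, v 2] :=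
    congrArg T (by funext i; fin_cases i <;> rfl)
  have e21 : (T fun i => v ((((Equiv.swap 0 4 * Equiv.swap 0 2) * (Equiv.swap 2 3) : Equiv.Perm (Fin 5)))⁻¹ i)) = T ![v 4, v 1, v 0, v 2, v 3] :=
    congrArg T (by funext i; fin_cases i <;> rfl)
  have e22 : (T fun i => v ((((Equiv.swap 0 4 * Equiv.swap 0 2) * (Equiv.swap 0 1) : Equiv.Perm (Fin 5)))⁻¹ i)) = T ![v 4, v 0, v 1, v 3, v 2] :=
    congrArg T (by funext i; fin_cases i <;> rfl)
  have e23 : (T fun i => v ((((Equiv.swap 0 4 * Equiv.swap 0 2) * (Equiv.swap 0 1 * Equiv.swap 2 3) : Equiv.Perm (Fin 5)))⁻¹ i)) = T ![v 4, v 0, v 1, v 2, v 3] :=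
    congrArg T (by funext i; fin_cases i <;> rfl)
  have e24 : (T fun i => v ((((Equiv.swap 0 2 * Equiv.swap 1 3) * (1) : Equiv.Perm (Fin 5)))⁻¹ i)) = T ![v 2, v 3, v 0, v 1, v 4] :=
    congrArg T (by funext i; fin_cases i <;> rfl)
  have e25 : (T fun i => v ((((Equiv.swap 0 2 * Equiv.swap 1 3) * (Equiv.swap 2 3) : Equiv.Perm (Fin 5)))⁻¹ i)) = T ![v 3, v 2, v 0, v 1, v 4] :=
    congrArg T (by funext i; fin_cases i <;> rfl)
  have e26 : (T fun i => v ((((Equiv.swap 0 2 * Equiv.swap 1 3) * (Equiv.swap 0 1) : Equiv.Perm (Fin 5)))⁻¹ i)) = T ![v 2, v 3, v 1, v 0, v 4] :=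
    congrArg T (by funext i; fin_cases i <;> rfl)
  have e27 : (T fun i => v ((((Equiv.swap 0 2 * Equiv.swap 1 3) * (Equiv.swap 0 1 * Equiv.swap 2 3) : Equiv.Perm (Fin 5)))⁻¹ i)) = T ![v 3, v 2, v 1, v 0, v 4] :=
    congrArg T (by funext i; fin_cases i <;> rfl)
  have e28 : (T fun i => v ((((Equiv.swap 0 4 * Equiv.swap 0 2 * Equiv.swap 1 3) * (1) : Equiv.Perm (Fin 5)))⁻¹ i)) = T ![v 4, v 3, v 0, v 1, v 2] :=
    congrArg T (by funext i; fin_cases i <;> rfl)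
  have e29 : (T fun i => v ((((Equiv.swap 0 4 * Equiv.swap 0 2 * Equiv.swap 1 3) * (Equiv.swap 2 3) : Equiv.Perm (Fin 5)))⁻¹ i)) = T ![v 4, v 2, v 0, v 1, v 3] :=
    congrArg T (by funext i; fin_cases i <;> rfl)
  have e30 : (T fun i => v ((((Equiv.swap 0 4 * Equiv.swap 0 2 * Equiv.swap 1 3) * (Equiv.swap 0 1) : Equiv.Perm (Fin 5)))⁻¹ i)) = T ![v 4, v 3, v 1, v 0, v 2] :=
    congrArg T (by funext i; fin_cases i <;> rfl)
  have e31 : (T fun i => v ((((Equiv.swap 0 4 * Equiv.swap 0 2 * Equiv.swap 1 3) * (Equiv.swap 0 1 * Equiv.swap 2 3) : Equiv.Perm (Fin 5)))⁻¹ i)) = T ![v 4, v 2, v 1, v 0, v 3] :=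
    congrArg T (by funext i; fin_cases i <;> rfl)
  have e32 : (T fun i => v ((((Equiv.swap 0 2 * Equiv.swap 0 4) * (1) : Equiv.Perm (Fin 5)))⁻¹ i)) = T ![v 2, v 1, v 4, v 3, v 0] :=
    congrArg T (by funext i; fin_cases i <;> rfl)
  have e33 : (T fun i => v ((((Equiv.swap 0 2 * Equiv.swap 0 4) * (Equiv.swap 2 3) : Equiv.Perm (Fin 5)))⁻¹ i)) = T ![v 3, v 1, v 4, v 2, v 0] :=
    congrArg T (by funext i; fin_cases i <;> rfl)
  have e34 : (T fun i => v ((((Equiv.swap 0 2 * Equiv.swap 0 4) * (Equiv.swap 0 1) : Equiv.Perm (Fin 5)))⁻¹ i)) = T ![v 2, v 0, v 4, v 3, v 1] :=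
    congrArg T (by funext i; fin_cases i <;> rfl)
  have e35 : (T fun i => v ((((Equiv.swap 0 2 * Equiv.swap 0 4) * (Equiv.swap 0 1 * Equiv.swap 2 3) : Equiv.Perm (Fin 5)))⁻¹ i)) = T ![v 3, v 0, v 4, v 2, v 1] :=
    congrArg T (by funext i; fin_cases i <;> rfl)
  have e36 : (T fun i => v ((((Equiv.swap 0 4) * (1) : Equiv.Perm (Fin 5)))⁻¹ i)) = T ![v 4, v 1, v 2, v 3, v 0] :=
    congrArg T (by funext i; fin_cases i <;> rfl)
  have e37 : (T fun i => v ((((Equiv.swap 0 4) * (Equiv.swap 2 3) : Equiv.Perm (Fin 5)))⁻¹ i)) = T ![v 4, v 1, v 3, v 2, v 0] :=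
    congrArg T (by funext i; fin_cases i <;> rfl)
  have e38 : (T fun i => v ((((Equiv.swap 0 4) * (Equiv.swap 0 1) : Equiv.Perm (Fin 5)))⁻¹ i)) = T ![v 4, v 0, v 2, v 3, v 1] :=
    congrArg T (by funext i; fin_cases i <;> rfl)
  have e39 : (T fun i => v ((((Equiv.swap 0 4) * (Equiv.swap 0 1 * Equiv.swap 2 3) : Equiv.Perm (Fin 5)))⁻¹ i)) = T ![v 4, v 0, v 3, v 2, v 1] :=
    congrArg T (by funext i; fin_cases i <;> rfl)
  have e40 : (T fun i => v ((((Equiv.swap 0 2 * Equiv.swap 0 4 * Equiv.swap 1 3) * (1) : Equiv.Perm (Fin 5)))⁻¹ i)) = T ![v 2, v 3, v 4, v 1, v 0] :=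
    congrArg T (by funext i; fin_cases i <;> rfl)
  have e41 : (T fun i => v ((((Equiv.swap 0 2 * Equiv.swap 0 4 * Equiv.swap 1 3) * (Equiv.swap 2 3) : Equiv.Perm (Fin 5)))⁻¹ i)) = T ![v 3, v 2, v 4, v 1, v 0] :=
    congrArg T (by funext i; fin_cases i <;> rfl)
  have e42 : (T fun i => v ((((Equiv.swap 0 2 * Equiv.swap 0 4 * Equiv.swap 1 3) * (Equiv.swap 0 1) : Equiv.Perm (Fin 5)))⁻¹ i)) = T ![v 2, v 3, v 4, v 0, v 1] :=
    congrArg T (by funext i; fin_cases i <;> rfl)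
  have e43 : (T fun i => v ((((Equiv.swap 0 2 * Equiv.swap 0 4 * Equiv.swap 1 3) * (Equiv.swap 0 1 * Equiv.swap 2 3) : Equiv.Perm (Fin 5)))⁻¹ i)) = T ![v 3, v 2, v 4, v 0, v 1] :=
    congrArg T (by funext i; fin_cases i <;> rfl)
  have e44 : (T fun i => v ((((Equiv.swap 0 4 * Equiv.swap 1 3) * (1) : Equiv.Perm (Fin 5)))⁻¹ i)) = T ![v 4, v 3, v 2, v 1, v 0] :=
    congrArg T (by funext i; fin_cases i <;> rfl)
  have e45 : (T fun i => v ((((Equiv.swap 0 4 * Equiv.swap 1 3) * (Equiv.swap 2 3) : Equiv.Perm (Fin 5)))⁻¹ i)) = T ![v 4, v 2, v 3, v 1, v 0] :=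
    congrArg T (by funext i; fin_cases i <;> rfl)
  have e46 : (T fun i => v ((((Equiv.swap 0 4 * Equiv.swap 1 3) * (Equiv.swap 0 1) : Equiv.Perm (Fin 5)))⁻¹ i)) = T ![v 4, v 3, v 2, v 0, v 1] :=
    congrArg T (by funext i; fin_cases i <;> rfl)
  have e47 : (T fun i => v ((((Equiv.swap 0 4 * Equiv.swap 1 3) * (Equiv.swap 0 1 * Equiv.swap 2 3) : Equiv.Perm (Fin 5)))⁻¹ i)) = T ![v 4, v 2, v 3, v 0, v 1] :=
    congrArg T (by funext i; fin_cases i <;> rfl)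
  rw [s0, s1, s2, s3, e0, e1, e2, e3, e4, e5, e6, e7, e8, e9, e10, e11, e12, e13, e14, e15, e16, e17, e18, e19, e20, e21, e22, e23, e24, e25, e26, e27, e28, e29, e30, e31, e32, e33, e34, e35, e36, e37, e38, e39, e40, e41, e42, e43, e44, e45, e46, e47]
  ring


set_option maxHeartbeats 4000000 in
/-- (a) `T` is an algebraic curvature tensor iff `y_t* T = 12·T`;
(b) `T̃` is an algebraic covariant derivative curvature tensor iff `y_{t'}* T̃ = 24·T̃`. -/
theorem stmt7 {𝕂 : Type*} [RCLike 𝕂] (V : Type*) [AddCommGroup V] [Module 𝕂 V] :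
    (∀ T : MultilinearMap 𝕂 (fun _ : Fin 4 => V) 𝕂,
      IsACT T ↔ gaAct (gaStar (youngT 𝕂)) T = (12 : 𝕂) • T) ∧
    (∀ T' : MultilinearMap 𝕂 (fun _ : Fin 5 => V) 𝕂,
      IsACDCT T' ↔ gaAct (gaStar (youngT' 𝕂)) T' = (24 : 𝕂) • T') := by
  constructor
  · intro T
    constructor
    · intro h
      refine MultilinearMap.ext fun v => ?_
      rw [keyA, MultilinearMap.smul_apply, smul_eq_mul,
        show T v = T ![v 0, v 1, v 2, v 3] from congrArg T (by funext i; fin_cases i <;> rfl)]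
      have f0 := (h (v 0) (v 1) (v 2) (v 3)).1
      have f1 := (h (v 0) (v 2) (v 1) (v 3)).1
      have f2 := (h (v 0) (v 3) (v 1) (v 2)).1
      have f3 := (h (v 1) (v 0) (v 2) (v 3)).1
      have f4 := (h (v 1) (v 2) (v 0) (v 3)).1
      have f5 := (h (v 1) (v 3) (v 0) (v 2)).1
      have f6 := (h (v 2) (v 3) (v 0) (v 1)).1
      have f7 := (h (v 3) (v 2) (v 0) (v 1)).1
      have f8 := (h (v 0) (v 1) (v 2) (v 3)).2.1
      have f9 := (h (v 0) (v 1) (v 3) (v 2)).2.1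
      have f10 := (h (v 0) (v 2) (v 1) (v 3)).2.1
      have f11 := (h (v 0) (v 2) (v 3) (v 1)).2.1
      have f12 := (h (v 0) (v 3) (v 1) (v 2)).2.1
      have f13 := (h (v 0) (v 3) (v 2) (v 1)).2.1
      have f14 := (h (v 1) (v 0) (v 2) (v 3)).2.1
      have f15 := (h (v 1) (v 2) (v 3) (v 0)).2.1
      have f16 := (h (v 1) (v 3) (v 2) (v 0)).2.1
      have f17 := (h (v 0) (v 1) (v 2) (v 3)).2.2
      linear_combination (-3 : 𝕂) * f0 + (2 : 𝕂) * f1 + (2 : 𝕂) * f2 + (1 : 𝕂) * f3 + (2 : 𝕂) * f4 + (-2 : 𝕂) * f5 + (-3 : 𝕂) * f6 + (1 : 𝕂) * f7 + (-4 : 𝕂) * f8 + (2 : 𝕂) * f9 + (-2 : 𝕂) * f10 + (1 : 𝕂) * f11 + (2 : 𝕂) * f12 + (-1 : 𝕂) * f13 + (-2 : 𝕂) * f14 + (-1 : 𝕂) * f15 + (1 : 𝕂) * f16 + (-4 : 𝕂) * f17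
    · intro h w x y z
      have hp : ∀ uu : Fin 4 → V, gaAct (gaStar (youngT 𝕂)) T uu = (12 : 𝕂) * T uu :=
        fun uu => by rw [h, MultilinearMap.smul_apply, smul_eq_mul]
      refine ⟨?_, ?_, ?_⟩
      · -- goal A
        have E0 := (keyA T ![w, x, y, z]).symm.trans (hp ![w, x, y, z])
        simp only [Matrix.cons_val_zero, Matrix.cons_val_one, Matrix.cons_val_two, Matrix.cons_val_three, Matrix.head_cons, Matrix.tail_cons] at E0
        have E1 := (keyA T ![w, x, z, y]).symm.trans (hp ![w, x, z, y])
        simp only [Matrix.cons_val_zero, Matrix.cons_val_one, Matrix.cons_val_two, Matrix.cons_val_three, Matrix.head_cons, Matrix.tail_cons] at E1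
        linear_combination ((-1 : 𝕂)/12) * E0 + ((-1 : 𝕂)/12) * E1
      · -- goal P
        have E0 := (keyA T ![w, x, y, z]).symm.trans (hp ![w, x, y, z])
        simp only [Matrix.cons_val_zero, Matrix.cons_val_one, Matrix.cons_val_two, Matrix.cons_val_three, Matrix.head_cons, Matrix.tail_cons] at E0
        have E1 := (keyA T ![y, z, w, x]).symm.trans (hp ![y, z, w, x])
        simp only [Matrix.cons_val_zero, Matrix.cons_val_one, Matrix.cons_val_two, Matrix.cons_val_three, Matrix.head_cons, Matrix.tail_cons] at E1
        linear_combination ((-1 : 𝕂)/12) * E0 + ((1 : 𝕂)/12) * E1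
      · -- goal B
        have E0 := (keyA T ![w, x, y, z]).symm.trans (hp ![w, x, y, z])
        simp only [Matrix.cons_val_zero, Matrix.cons_val_one, Matrix.cons_val_two, Matrix.cons_val_three, Matrix.head_cons, Matrix.tail_cons] at E0
        have E1 := (keyA T ![w, y, z, x]).symm.trans (hp ![w, y, z, x])
        simp only [Matrix.cons_val_zero, Matrix.cons_val_one, Matrix.cons_val_two, Matrix.cons_val_three, Matrix.head_cons, Matrix.tail_cons] at E1
        have E2 := (keyA T ![w, z, x, y]).symm.trans (hp ![w, z, x, y])
        simp only [Matrix.cons_val_zero, Matrix.cons_val_one, Matrix.cons_val_two, Matrix.cons_val_three, Matrix.head_cons, Matrix.tail_cons] at E2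
        linear_combination ((-1 : 𝕂)/12) * E0 + ((-1 : 𝕂)/12) * E1 + ((-1 : 𝕂)/12) * E2

  · intro T
    constructor
    · intro h
      refine MultilinearMap.ext fun v => ?_
      rw [keyB, MultilinearMap.smul_apply, smul_eq_mul,
        show T v = T ![v 0, v 1, v 2, v 3, v 4] from congrArg T (by funext i; fin_cases i <;> rfl)]
      have f0 := (h (v 4) (v 0) (v 1) (v 2) (v 3)).1
      have f1 := (h (v 3) (v 0) (v 1) (v 2) (v 4)).1
      have f2 := (h (v 2) (v 0) (v 1) (v 3) (v 4)).1
      have f3 := (h (v 4) (v 0) (v 2) (v 1) (v 3)).1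
      have f4 := (h (v 1) (v 0) (v 2) (v 3) (v 4)).1
      have f5 := (h (v 4) (v 0) (v 3) (v 1) (v 2)).1
      have f6 := (h (v 1) (v 0) (v 3) (v 2) (v 4)).1
      have f7 := (h (v 1) (v 0) (v 4) (v 2) (v 3)).1
      have f8 := (h (v 4) (v 1) (v 0) (v 2) (v 3)).1
      have f9 := (h (v 3) (v 1) (v 0) (v 2) (v 4)).1
      have f10 := (h (v 2) (v 1) (v 0) (v 3) (v 4)).1
      have f11 := (h (v 4) (v 1) (v 2) (v 0) (v 3)).1
      have f12 := (h (v 3) (v 1) (v 2) (v 0) (v 4)).1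
      have f13 := (h (v 0) (v 1) (v 2) (v 3) (v 4)).1
      have f14 := (h (v 4) (v 1) (v 3) (v 0) (v 2)).1
      have f15 := (h (v 2) (v 1) (v 3) (v 0) (v 4)).1
      have f16 := (h (v 0) (v 1) (v 3) (v 2) (v 4)).1
      have f17 := (h (v 0) (v 1) (v 4) (v 2) (v 3)).1
      have f18 := (h (v 1) (v 2) (v 0) (v 3) (v 4)).1
      have f19 := (h (v 0) (v 2) (v 1) (v 3) (v 4)).1
      have f20 := (h (v 4) (v 2) (v 3) (v 0) (v 1)).1
      have f21 := (h (v 1) (v 2) (v 3) (v 0) (v 4)).1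
      have f22 := (h (v 0) (v 2) (v 3) (v 1) (v 4)).1
      have f23 := (h (v 3) (v 2) (v 4) (v 0) (v 1)).1
      have f24 := (h (v 1) (v 2) (v 4) (v 0) (v 3)).1
      have f25 := (h (v 0) (v 2) (v 4) (v 1) (v 3)).1
      have f26 := (h (v 1) (v 3) (v 0) (v 2) (v 4)).1
      have f27 := (h (v 0) (v 3) (v 1) (v 2) (v 4)).1
      have f28 := (h (v 4) (v 3) (v 2) (v 0) (v 1)).1
      have f29 := (h (v 1) (v 3) (v 2) (v 0) (v 4)).1
      have f30 := (h (v 0) (v 3) (v 2) (v 1) (v 4)).1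
      have f31 := (h (v 2) (v 3) (v 4) (v 0) (v 1)).1
      have f32 := (h (v 1) (v 3) (v 4) (v 0) (v 2)).1
      have f33 := (h (v 0) (v 3) (v 4) (v 1) (v 2)).1
      have f34 := (h (v 1) (v 4) (v 0) (v 2) (v 3)).1
      have f35 := (h (v 0) (v 4) (v 1) (v 2) (v 3)).1
      have f36 := (h (v 3) (v 4) (v 2) (v 0) (v 1)).1
      have f37 := (h (v 1) (v 4) (v 2) (v 0) (v 3)).1
      have f38 := (h (v 0) (v 4) (v 2) (v 1) (v 3)).1
      have f39 := (h (v 2) (v 4) (v 3) (v 0) (v 1)).1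
      have f40 := (h (v 1) (v 4) (v 3) (v 0) (v 2)).1
      have f41 := (h (v 0) (v 4) (v 3) (v 1) (v 2)).1
      have f42 := (h (v 4) (v 0) (v 1) (v 2) (v 3)).2.1
      have f43 := (h (v 3) (v 0) (v 1) (v 2) (v 4)).2.1
      have f44 := (h (v 4) (v 0) (v 1) (v 3) (v 2)).2.1
      have f45 := (h (v 2) (v 0) (v 1) (v 3) (v 4)).2.1
      have f46 := (h (v 3) (v 0) (v 1) (v 4) (v 2)).2.1
      have f47 := (h (v 2) (v 0) (v 1) (v 4) (v 3)).2.1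
      have f48 := (h (v 4) (v 0) (v 2) (v 1) (v 3)).2.1
      have f49 := (h (v 4) (v 0) (v 2) (v 3) (v 1)).2.1
      have f50 := (h (v 1) (v 0) (v 2) (v 3) (v 4)).2.1
      have f51 := (h (v 3) (v 0) (v 2) (v 4) (v 1)).2.1
      have f52 := (h (v 1) (v 0) (v 2) (v 4) (v 3)).2.1
      have f53 := (h (v 4) (v 0) (v 3) (v 1) (v 2)).2.1
      have f54 := (h (v 4) (v 0) (v 3) (v 2) (v 1)).2.1
      have f55 := (h (v 1) (v 0) (v 3) (v 2) (v 4)).2.1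
      have f56 := (h (v 2) (v 0) (v 3) (v 4) (v 1)).2.1
      have f57 := (h (v 1) (v 0) (v 3) (v 4) (v 2)).2.1
      have f58 := (h (v 3) (v 0) (v 4) (v 1) (v 2)).2.1
      have f59 := (h (v 2) (v 0) (v 4) (v 1) (v 3)).2.1
      have f60 := (h (v 1) (v 0) (v 4) (v 2) (v 3)).2.1
      have f61 := (h (v 1) (v 0) (v 4) (v 3) (v 2)).2.1
      have f62 := (h (v 4) (v 1) (v 0) (v 2) (v 3)).2.1
      have f63 := (h (v 3) (v 1) (v 0) (v 2) (v 4)).2.1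
      have f64 := (h (v 2) (v 1) (v 0) (v 3) (v 4)).2.1
      have f65 := (h (v 4) (v 1) (v 2) (v 3) (v 0)).2.1
      have f66 := (h (v 0) (v 1) (v 2) (v 3) (v 4)).2.1
      have f67 := (h (v 3) (v 1) (v 2) (v 4) (v 0)).2.1
      have f68 := (h (v 0) (v 1) (v 2) (v 4) (v 3)).2.1
      have f69 := (h (v 4) (v 1) (v 3) (v 2) (v 0)).2.1
      have f70 := (h (v 0) (v 1) (v 3) (v 2) (v 4)).2.1
      have f71 := (h (v 2) (v 1) (v 3) (v 4) (v 0)).2.1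
      have f72 := (h (v 0) (v 1) (v 3) (v 4) (v 2)).2.1
      have f73 := (h (v 0) (v 1) (v 4) (v 2) (v 3)).2.1
      have f74 := (h (v 0) (v 1) (v 4) (v 3) (v 2)).2.1
      have f75 := (h (v 1) (v 2) (v 0) (v 3) (v 4)).2.1
      have f76 := (h (v 0) (v 2) (v 1) (v 3) (v 4)).2.1
      have f77 := (h (v 1) (v 2) (v 3) (v 4) (v 0)).2.1
      have f78 := (h (v 0) (v 2) (v 3) (v 4) (v 1)).2.1
      have f79 := (h (v 1) (v 2) (v 4) (v 3) (v 0)).2.1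
      have f80 := (h (v 0) (v 2) (v 4) (v 3) (v 1)).2.1
      have f81 := (h (v 4) (v 0) (v 1) (v 2) (v 3)).2.2.1
      have f82 := (h (v 3) (v 0) (v 1) (v 2) (v 4)).2.2.1
      have f83 := (h (v 2) (v 0) (v 1) (v 3) (v 4)).2.2.1
      have f84 := (h (v 1) (v 0) (v 2) (v 3) (v 4)).2.2.1
      have f85 := (h (v 0) (v 1) (v 2) (v 3) (v 4)).2.2.1
      have f86 := (h (v 4) (v 0) (v 2) (v 1) (v 3)).2.2.2
      have f87 := (h (v 4) (v 0) (v 3) (v 1) (v 2)).2.2.2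
      have f88 := (h (v 4) (v 1) (v 2) (v 0) (v 3)).2.2.2
      have f89 := (h (v 4) (v 1) (v 3) (v 0) (v 2)).2.2.2
      linear_combination (-3 : 𝕂) * f0 + (-3 : 𝕂) * f1 + (3 : 𝕂) * f2 + (14 : 𝕂) * f3 + (1 : 𝕂) * f4 + (2 : 𝕂) * f5 + (-5 : 𝕂) * f6 + (-1 : 𝕂) * f7 + (1 : 𝕂) * f8 + (1 : 𝕂) * f9 + (-1 : 𝕂) * f10 + (2 : 𝕂) * f11 + (-4 : 𝕂) * f12 + (-1 : 𝕂) * f13 + (-2 : 𝕂) * f14 + (4 : 𝕂) * f15 + (5 : 𝕂) * f16 + (1 : 𝕂) * f17 + (-1 : 𝕂) * f18 + (1 : 𝕂) * f19 + (-3 : 𝕂) * f20 + (-3 : 𝕂) * f21 + (3 : 𝕂) * f22 + (-1 : 𝕂) * f23 + (-1 : 𝕂) * f24 + (1 : 𝕂) * f25 + (1 : 𝕂) * f26 + (-1 : 𝕂) * f27 + (1 : 𝕂) * f28 + (1 : 𝕂) * f29 + (-1 : 𝕂) * f30 + (1 : 𝕂) * f31 + (1 : 𝕂) * f32 + (-1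 : 𝕂) * f33 + (1 : 𝕂) * f34 + (-1 : 𝕂) * f35 + (1 : 𝕂) * f36 + (1 : 𝕂) * f37 + (-1 : 𝕂) * f38 + (-1 : 𝕂) * f39 + (-1 : 𝕂) * f40 + (1 : 𝕂) * f41 + (-4 : 𝕂) * f42 + (-1 : 𝕂) * f43 + (2 : 𝕂) * f44 + (1 : 𝕂) * f45 + (2 : 𝕂) * f46 + (-2 : 𝕂) * f47 + (-8 : 𝕂) * f48 + (1 : 𝕂) * f49 + (1 : 𝕂) * f50 + (1 : 𝕂) * f51 + (-1 : 𝕂) * f52 + (8 : 𝕂) * f53 + (-1 : 𝕂) * f54 + (-1 : 𝕂) * f55 + (-1 : 𝕂) * f56 + (1 : 𝕂) * f57 + (-4 : 𝕂) * f58 + (4 : 𝕂) * f59 + (-3 : 𝕂) * f60 + (1 : 𝕂) * f61 + (-2 : 𝕂) * f62 + (-1 : 𝕂) * f63 + (1 : 𝕂) * f64 + (-1 : 𝕂) * f65 + (-1 : 𝕂) * f66 + (-1 : 𝕂) * f67 + (1 : 𝕂) * f68 + (1 : 𝕂) * f69 + (1 : 𝕂) * f70 + (1 : 𝕂) * f71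 + (-1 : 𝕂) * f72 + (3 : 𝕂) * f73 + (-1 : 𝕂) * f74 + (1 : 𝕂) * f75 + (-1 : 𝕂) * f76 + (2 : 𝕂) * f77 + (-2 : 𝕂) * f78 + (1 : 𝕂) * f79 + (-1 : 𝕂) * f80 + (-16 : 𝕂) * f81 + (4 : 𝕂) * f82 + (-4 : 𝕂) * f83 + (4 : 𝕂) * f84 + (-4 : 𝕂) * f85 + (-6 : 𝕂) * f86 + (6 : 𝕂) * f87 + (6 : 𝕂) * f88 + (-6 : 𝕂) * f89
    · intro h u w x y z
      have hp : ∀ uu : Fin 5 → V, gaAct (gaStar (youngT' 𝕂)) T uu = (24 : 𝕂) * T uu :=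
        fun uu => by rw [h, MultilinearMap.smul_apply, smul_eq_mul]
      refine ⟨?_, ?_, ?_, ?_⟩
      · -- goal A
        have E0 := (keyB T ![w, x, y, z, u]).symm.trans (hp ![w, x, y, z, u])
        simp only [Matrix.cons_val_zero, Matrix.cons_val_one, Matrix.cons_val_two, Matrix.cons_val_three, Matrix.cons_val_four, Matrix.head_cons, Matrix.tail_cons] at E0
        have E1 := (keyB T ![w, x, z, y, u]).symm.trans (hp ![w, x, z, y, u])
        simp only [Matrix.cons_val_zero, Matrix.cons_val_one, Matrix.cons_val_two, Matrix.cons_val_three, Matrix.cons_val_four, Matrix.head_cons, Matrix.tail_cons] at E1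
        linear_combination ((-1 : 𝕂)/24) * E0 + ((-1 : 𝕂)/24) * E1
      · -- goal P
        have E0 := (keyB T ![w, x, y, z, u]).symm.trans (hp ![w, x, y, z, u])
        simp only [Matrix.cons_val_zero, Matrix.cons_val_one, Matrix.cons_val_two, Matrix.cons_val_three, Matrix.cons_val_four, Matrix.head_cons, Matrix.tail_cons] at E0
        have E1 := (keyB T ![y, z, w, x, u]).symm.trans (hp ![y, z, w, x, u])
        simp only [Matrix.cons_val_zero, Matrix.cons_val_one, Matrix.cons_val_two, Matrix.cons_val_three, Matrix.cons_val_four, Matrix.head_cons, Matrix.tail_cons] at E1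
        linear_combination ((-1 : 𝕂)/24) * E0 + ((1 : 𝕂)/24) * E1
      · -- goal B
        have E0 := (keyB T ![w, x, y, z, u]).symm.trans (hp ![w, x, y, z, u])
        simp only [Matrix.cons_val_zero, Matrix.cons_val_one, Matrix.cons_val_two, Matrix.cons_val_three, Matrix.cons_val_four, Matrix.head_cons, Matrix.tail_cons] at E0
        have E1 := (keyB T ![w, y, z, x, u]).symm.trans (hp ![w, y, z, x, u])
        simp only [Matrix.cons_val_zero, Matrix.cons_val_one, Matrix.cons_val_two, Matrix.cons_val_three, Matrix.cons_val_four, Matrix.head_cons, Matrix.tail_cons] at E1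
        have E2 := (keyB T ![w, z, x, y, u]).symm.trans (hp ![w, z, x, y, u])
        simp only [Matrix.cons_val_zero, Matrix.cons_val_one, Matrix.cons_val_two, Matrix.cons_val_three, Matrix.cons_val_four, Matrix.head_cons, Matrix.tail_cons] at E2
        linear_combination ((-1 : 𝕂)/24) * E0 + ((-1 : 𝕂)/24) * E1 + ((-1 : 𝕂)/24) * E2
      · -- goal C
        have E0 := (keyB T ![w, x, y, z, u]).symm.trans (hp ![w, x, y, z, u])
        simp only [Matrix.cons_val_zero, Matrix.cons_val_one, Matrix.cons_val_two, Matrix.cons_val_three, Matrix.cons_val_four, Matrix.head_cons, Matrix.tail_cons] at E0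
        have E1 := (keyB T ![w, x, z, u, y]).symm.trans (hp ![w, x, z, u, y])
        simp only [Matrix.cons_val_zero, Matrix.cons_val_one, Matrix.cons_val_two, Matrix.cons_val_three, Matrix.cons_val_four, Matrix.head_cons, Matrix.tail_cons] at E1
        have E2 := (keyB T ![w, x, u, y, z]).symm.trans (hp ![w, x, u, y, z])
        simp only [Matrix.cons_val_zero, Matrix.cons_val_one, Matrix.cons_val_two, Matrix.cons_val_three, Matrix.cons_val_four, Matrix.head_cons, Matrix.tail_cons] at E2
        linear_combination ((-1 : 𝕂)/24) * E0 + ((-1 : 𝕂)/24) * E1 + ((-1 : 𝕂)/24) * E2
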